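/- For the standard Brownian excursion W⁺₀ and its maximum M⁺₀ = max{W⁺₀(t) : t ∈ [0,1]}, the expectation satisfies E[M⁺₀] = √(π/2). -/

import Mathlib

open MeasureTheory ProbabilityTheory Set

namespace ExcursionAux

lemma summable_exp_linear {c : ℝ} (hc : 0 < c) :
    Summable (fun k : ℕ => Real.exp (-(c * ((k : ℝ) + 1)))) := by
  have h : ∀ k : ℕ, Real.exp (-(c * ((k : ℝ) + 1))) = Real.exp (-c) ^ k * Real.exp (-c) := by
    intro k
    rw [← Real.exp_nat_mul, ← Real.exp_add]
    ring_nf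
  simp_rw [h]
  exact (summable_geometric_of_lt_one (Real.exp_nonneg _)
    (Real.exp_lt_one_iff.2 (by linarith))).mul_right _

lemma summable_exp_sq {c : ℝ} (hc : 0 < c) :
    Summable (fun k : ℕ => Real.exp (-(c * ((k : ℝ) + 1) ^ 2))) := by
  refine Summable.of_nonneg_of_le (fun k => Real.exp_nonneg _) (fun k => ?_)
    (summable_exp_linear hc)
  apply Real.exp_le_exp.2
  have hk : (1 : ℝ) ≤ (k : ℝ) + 1 := by
    have : (0:ℝ) ≤ (k:ℝ) := Nat.cast_nonneg k
    linarith
  have h2 : ((k : ℝ) + 1) ≤ ((k : ℝ) + 1) ^ 2 := by nlinarith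
  have h3 := mul_le_mul_of_nonneg_left h2 hc.le
  linarith


noncomputable def F (x : ℝ) : ℝ :=
  2 * ∑' k : ℕ, x * Real.exp (-(2 * ((k : ℝ) + 1) * x) ^ 2 / 2)

lemma exp_arg_eq (k : ℕ) (x : ℝ) :
    -(2 * ((k : ℝ) + 1) * x) ^ 2 / 2 = -(2 * x ^ 2 * ((k : ℝ) + 1) ^ 2) := by ring

lemma summable_term {x : ℝ} (hx : 0 < x) :
    Summable (fun k : ℕ => x * Real.exp (-(2 * ((k : ℝ) + 1) * x) ^ 2 / 2)) := by
  simp_rw [exp_arg_eq]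
  exact (summable_exp_sq (by positivity)).mul_left x

lemma term_hasDerivAt (k : ℕ) (x : ℝ) :
    HasDerivAt (fun t => t * Real.exp (-(2 * ((k : ℝ) + 1) * t) ^ 2 / 2))
      (Real.exp (-(2 * ((k : ℝ) + 1) * x) ^ 2 / 2) * (1 - (2 * ((k : ℝ) + 1) * x) ^ 2)) x := by
  set a : ℝ := 2 * ((k : ℝ) + 1) with ha
  have h1 : HasDerivAt (fun t : ℝ => -(a * t) ^ 2 / 2) (-(a ^ 2 * x)) x := by
    have h := (((hasDerivAt_id x).const_mul a).pow 2).neg.div_const 2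
    refine h.congr_deriv ?_
    simp [mul_comm]
    ring
  have h3 := (hasDerivAt_id x).mul h1.exp
  refine h3.congr_deriv ?_
  simp only [id_eq]
  ring

lemma deriv_bound {b : ℝ} (hb : 0 < b) (k : ℕ) {t : ℝ} (ht : b ≤ t) :
    ‖Real.exp (-(2 * ((k : ℝ) + 1) * t) ^ 2 / 2) * (1 - (2 * ((k : ℝ) + 1) * t) ^ 2)‖
      ≤ 2 * Real.exp (-(b ^ 2 / 2 * ((k : ℝ) + 1))) := by
  set a : ℝ := 2 * ((k : ℝ) + 1) with ha
  set s : ℝ := (a * t) ^ 2 / 2 with hs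
  have hs0 : 0 ≤ s := by positivity
  have harg : -(a * t) ^ 2 / 2 = -s := by rw [hs]; ring
  have hfac : (1 : ℝ) - (a * t) ^ 2 = 1 - 2 * s := by rw [hs]; ring
  rw [harg, hfac]
  have h0 : ‖Real.exp (-s) * (1 - 2 * s)‖ = Real.exp (-s) * |1 - 2 * s| := by
    rw [Real.norm_eq_abs, abs_mul, abs_of_pos (Real.exp_pos _)]
  rw [h0]
  have h1 : |1 - 2 * s| ≤ 1 + 2 * s := by
    rw [abs_le]; constructor <;> linarith
  have he : (1 + 3 * s / 8) ≤ Real.exp (3 * s / 8) := by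
    have := Real.add_one_le_exp (3 * s / 8); linarith
  have hsq : (1 + 3 * s / 8) * (1 + 3 * s / 8) ≤ Real.exp (3 * s / 8) * Real.exp (3 * s / 8) :=
    mul_le_mul he he (by positivity) (Real.exp_nonneg _)
  have hprod : Real.exp (3 * s / 8) * Real.exp (3 * s / 8) = Real.exp (3 * s / 4) := by
    rw [← Real.exp_add]; ring_nf
  have h2 : 1 + 2 * s ≤ 2 * Real.exp (3 * s / 4) := by
    nlinarith [hs0, sq_nonneg (3 * s - 8)]
  have h3 : Real.exp (-s) * (1 + 2 * s) ≤ 2 * Real.exp (-(s / 4)) := by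
    have hm := mul_le_mul_of_nonneg_left h2 (Real.exp_pos (-s)).le
    have heq : Real.exp (-s) * (2 * Real.exp (3 * s / 4)) = 2 * Real.exp (-(s / 4)) := by
      rw [mul_left_comm, ← Real.exp_add, show -s + 3 * s / 4 = -(s / 4) by ring]
    linarith [hm, heq.le, heq.ge]
  have h4 : b ^ 2 / 2 * ((k : ℝ) + 1) ≤ s / 4 := by
    have hk1 : (1 : ℝ) ≤ (k : ℝ) + 1 := by
      have : (0:ℝ) ≤ (k:ℝ) := Nat.cast_nonneg k
      linarith
    have htt : b ^ 2 ≤ t ^ 2 := by nlinarith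
    have : s / 4 = ((k : ℝ) + 1) ^ 2 * t ^ 2 / 2 := by rw [hs, ha]; ring
    rw [this]
    have hkk : ((k : ℝ) + 1) ≤ ((k : ℝ) + 1) ^ 2 := by nlinarith
    nlinarith [mul_le_mul_of_nonneg_left htt (by positivity : (0:ℝ) ≤ ((k:ℝ)+1)^2 / 2)]
  have h5 : Real.exp (-(s / 4)) ≤ Real.exp (-(b ^ 2 / 2 * ((k : ℝ) + 1))) := by
    apply Real.exp_le_exp.2; linarith
  calc Real.exp (-s) * |1 - 2 * s| ≤ Real.exp (-s) * (1 + 2 * s) := by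
        exact mul_le_mul_of_nonneg_left h1 (Real.exp_pos _).le
    _ ≤ 2 * Real.exp (-(s / 4)) := h3
    _ ≤ 2 * Real.exp (-(b ^ 2 / 2 * ((k : ℝ) + 1))) := by linarith


lemma F_hasDerivAt {x : ℝ} (hx : 0 < x) :
    HasDerivAt F
      (2 * ∑' k : ℕ, Real.exp (-(2 * ((k : ℝ) + 1) * x) ^ 2 / 2)
        * (1 - (2 * ((k : ℝ) + 1) * x) ^ 2)) x := by
  have hb : 0 < x / 2 := by linarith
  have key := hasDerivAt_tsum_of_isPreconnected
    (u := fun k : ℕ => 2 * Real.exp (-((x / 2) ^ 2 / 2 * ((k : ℝ) + 1))))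
    (g := fun (k : ℕ) (t : ℝ) => t * Real.exp (-(2 * ((k : ℝ) + 1) * t) ^ 2 / 2))
    (g' := fun (k : ℕ) (t : ℝ) =>
      Real.exp (-(2 * ((k : ℝ) + 1) * t) ^ 2 / 2) * (1 - (2 * ((k : ℝ) + 1) * t) ^ 2))
    ((summable_exp_linear (by positivity)).mul_left 2)
    (isOpen_Ioi (a := x / 2)) isPreconnected_Ioi
    (fun k y _ => term_hasDerivAt k y)
    (fun k y hy => deriv_bound hb k (le_of_lt hy))
    (show x ∈ Ioi (x / 2) by simp only [mem_Ioi]; linarith)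
    (summable_term hx)
    (show x ∈ Ioi (x / 2) by simp only [mem_Ioi]; linarith)
  unfold F
  exact key.const_mul 2

lemma F_nonneg {x : ℝ} (hx : 0 ≤ x) : 0 ≤ F x := by
  unfold F
  apply mul_nonneg (by norm_num)
  exact tsum_nonneg fun k => mul_nonneg hx (Real.exp_nonneg _)

lemma F_tendsto_atTop : Filter.Tendsto F Filter.atTop (nhds 0) := by
  set c : ℝ := 2 * (1 - Real.exp (-2))⁻¹ with hc
  have he2 : Real.exp (-2) < 1 := Real.exp_lt_one_iff.2 (by norm_num)
  have hc0 : 0 ≤ c := by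
    apply mul_nonneg (by norm_num)
    rw [inv_nonneg]; linarith
  have hbound : ∀ x : ℝ, 1 ≤ x → F x ≤ c * (x * Real.exp (-x)) := by
    intro x hx
    have hx0 : 0 < x := by linarith
    have hterm : ∀ k : ℕ, x * Real.exp (-(2 * ((k : ℝ) + 1) * x) ^ 2 / 2)
        ≤ (x * Real.exp (-2 * x)) * Real.exp (-2) ^ k := by
      intro k
      have hk0 : (0 : ℝ) ≤ (k : ℝ) := Nat.cast_nonneg k
      have hexp : Real.exp (-(2 * ((k : ℝ) + 1) * x) ^ 2 / 2)
          ≤ Real.exp (-2 * x) * Real.exp (-2) ^ k := by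
        rw [← Real.exp_nat_mul, ← Real.exp_add]
        apply Real.exp_le_exp.2
        have : -(2 * ((k : ℝ) + 1) * x) ^ 2 / 2 = -(2 * ((k : ℝ) + 1) ^ 2 * x ^ 2) := by ring
        rw [this]
        have h1 : 2 * x + 2 * (k : ℝ) ≤ 2 * ((k : ℝ) + 1) * x := by nlinarith
        have h2 : 2 * ((k : ℝ) + 1) * x ≤ 2 * ((k : ℝ) + 1) ^ 2 * x ^ 2 := by nlinarith
        linarith
      calc x * Real.exp (-(2 * ((k : ℝ) + 1) * x) ^ 2 / 2)
          ≤ x * (Real.exp (-2 * x) * Real.exp (-2) ^ k) :=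
            mul_le_mul_of_nonneg_left hexp hx0.le
        _ = (x * Real.exp (-2 * x)) * Real.exp (-2) ^ k := by ring
    have hsum : Summable fun k : ℕ => (x * Real.exp (-2 * x)) * Real.exp (-2) ^ k :=
      (summable_geometric_of_lt_one (Real.exp_nonneg _) he2).mul_left _
    have htsum : (∑' k : ℕ, x * Real.exp (-(2 * ((k : ℝ) + 1) * x) ^ 2 / 2))
        ≤ ∑' k : ℕ, (x * Real.exp (-2 * x)) * Real.exp (-2) ^ k :=
      Summable.tsum_le_tsum hterm (summable_term hx0) hsum
    have hgeo : (∑' k : ℕ, (x * Real.exp (-2 * x)) * Real.exp (-2) ^ k)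
        = (x * Real.exp (-2 * x)) * (1 - Real.exp (-2))⁻¹ := by
      rw [tsum_mul_left, tsum_geometric_of_lt_one (Real.exp_nonneg _) he2]
    have hmono : x * Real.exp (-2 * x) ≤ x * Real.exp (-x) := by
      apply mul_le_mul_of_nonneg_left _ hx0.le
      apply Real.exp_le_exp.2; linarith
    have hcinv : (0:ℝ) ≤ (1 - Real.exp (-2))⁻¹ := by rw [inv_nonneg]; linarith
    unfold F
    calc 2 * ∑' k : ℕ, x * Real.exp (-(2 * ((k : ℝ) + 1) * x) ^ 2 / 2)
        ≤ 2 * ((x * Real.exp (-2 * x)) * (1 - Real.exp (-2))⁻¹) := by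
          rw [← hgeo]; linarith
      _ ≤ 2 * ((x * Real.exp (-x)) * (1 - Real.exp (-2))⁻¹) := by
          apply mul_le_mul_of_nonneg_left _ (by norm_num)
          exact mul_le_mul_of_nonneg_right hmono hcinv
      _ = c * (x * Real.exp (-x)) := by rw [hc]; ring
  have hlim : Filter.Tendsto (fun x : ℝ => c * (x * Real.exp (-x))) Filter.atTop (nhds 0) := by
    have h := Real.tendsto_pow_mul_exp_neg_atTop_nhds_zero 1
    simp only [pow_one] at h
    simpa using h.const_mul c
  apply tendsto_of_tendsto_of_tendsto_of_le_of_le' tendsto_const_nhds hlim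
  · filter_upwards [Filter.eventually_ge_atTop (1:ℝ)] with x hx
    exact F_nonneg (by linarith)
  · filter_upwards [Filter.eventually_ge_atTop (1:ℝ)] with x hx
    exact hbound x hx


lemma theta_split {c : ℝ} (hc : 0 < c) :
    (∑' n : ℤ, Real.exp (-(c * (n : ℝ) ^ 2)))
      = 1 + 2 * ∑' k : ℕ, Real.exp (-(c * ((k : ℝ) + 1) ^ 2)) := by
  have hsum1 : Summable (fun k : ℕ => Real.exp (-(c * ((k : ℝ) + 1) ^ 2))) := summable_exp_sq hc
  set f : ℤ → ℝ := fun n => Real.exp (-(c * (n : ℝ) ^ 2)) with hf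
  have hsum0 : Summable (fun n : ℕ => f n) := by
    rw [← summable_nat_add_iff 1]
    refine hsum1.congr fun k => ?_
    simp only [hf]
    congr 1
    push_cast
    ring
  have hsumneg : Summable (fun n : ℕ => f (-(n + 1))) := by
    refine hsum1.congr fun k => ?_
    simp only [hf]
    congr 1
    push_cast
    ring
  rw [tsum_of_nat_of_neg_add_one hsum0 hsumneg]
  have e1 : (∑' n : ℕ, f n) = 1 + ∑' k : ℕ, Real.exp (-(c * ((k : ℝ) + 1) ^ 2)) := by
    rw [Summable.tsum_eq_zero_add hsum0]
    congr 1
    · simp [hf]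
    · refine tsum_congr fun k => ?_
      simp only [hf]
      congr 1
      push_cast
      ring
  have e2 : (∑' n : ℕ, f (-(n + 1))) = ∑' k : ℕ, Real.exp (-(c * ((k : ℝ) + 1) ^ 2)) := by
    refine tsum_congr fun k => ?_
    simp only [hf]
    congr 1
    push_cast
    ring
  rw [e1, e2]
  ring

lemma F_eq {x : ℝ} (hx : 0 < x) :
    F x = Real.sqrt (Real.pi / 2)
      * (1 + 2 * ∑' k : ℕ, Real.exp (-(Real.pi ^ 2 / (2 * x ^ 2) * ((k : ℝ) + 1) ^ 2))) - x := by
  have hpi := Real.pi_pos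
  have hc : (0 : ℝ) < 2 * x ^ 2 := by positivity
  have hc' : (0 : ℝ) < Real.pi ^ 2 / (2 * x ^ 2) := by positivity
  set a : ℝ := 2 * x ^ 2 / Real.pi with ha
  have ha0 : 0 < a := by positivity
  -- Jacobi transformation
  have hjac := Real.tsum_exp_neg_mul_int_sq ha0
  have harg1 : ∀ n : ℤ, -Real.pi * a * (n : ℝ) ^ 2 = -(2 * x ^ 2 * (n : ℝ) ^ 2) := by
    intro n; rw [ha]; field_simp
  have key2 : -Real.pi / a = -(Real.pi ^ 2 / (2 * x ^ 2)) := by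
    rw [ha]; field_simp
  have harg2 : ∀ n : ℤ, -Real.pi / a * (n : ℝ) ^ 2
      = -(Real.pi ^ 2 / (2 * x ^ 2) * (n : ℝ) ^ 2) := by
    intro n; rw [key2, neg_mul]
  simp_rw [harg1, harg2] at hjac
  -- a ^ (1/2) = x * sqrt(2/pi)
  have hsqrt : a ^ ((1 : ℝ) / 2) = x * Real.sqrt (2 / Real.pi) := by
    rw [← Real.sqrt_eq_rpow, ha, show 2 * x ^ 2 / Real.pi = x ^ 2 * (2 / Real.pi) by ring,
      Real.sqrt_mul (sq_nonneg x), Real.sqrt_sq hx.le]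
  have hs2 : Real.sqrt (2 / Real.pi) = (Real.sqrt (Real.pi / 2))⁻¹ := by
    rw [show (2 : ℝ) / Real.pi = (Real.pi / 2)⁻¹ by field_simp, Real.sqrt_inv]
  have hsp : 0 < Real.sqrt (Real.pi / 2) := Real.sqrt_pos.2 (by positivity)
  -- rewrite both theta sums via theta_split
  rw [theta_split hc, theta_split hc'] at hjac
  -- F x = x * (theta - 1)
  have hF : F x = x * ((1 + 2 * ∑' k : ℕ, Real.exp (-(2 * x ^ 2 * ((k : ℝ) + 1) ^ 2))) - 1) := by
    unfold F
    simp_rw [exp_arg_eq]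
    rw [tsum_mul_left]
    ring
  rw [hF, hjac, hsqrt, hs2]
  field_simp

lemma T_tendsto :
    Filter.Tendsto
      (fun x : ℝ => ∑' k : ℕ, Real.exp (-(Real.pi ^ 2 / (2 * x ^ 2) * ((k : ℝ) + 1) ^ 2)))
      (nhdsWithin 0 (Ioi 0)) (nhds 0) := by
  have hpi := Real.pi_pos
  set C : ℝ := (1 - Real.exp (-4))⁻¹ with hC
  have he4 : Real.exp (-4) < 1 := Real.exp_lt_one_iff.2 (by norm_num)
  have hC0 : 0 ≤ C := by rw [hC, inv_nonneg]; linarith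
  have hbound : ∀ x : ℝ, 0 < x → x ≤ 1 →
      (∑' k : ℕ, Real.exp (-(Real.pi ^ 2 / (2 * x ^ 2) * ((k : ℝ) + 1) ^ 2)))
        ≤ Real.exp (-(Real.pi ^ 2 / (2 * x ^ 2))) * C := by
    intro x hx hx1
    set c : ℝ := Real.pi ^ 2 / (2 * x ^ 2) with hc
    have hc0 : 0 < c := by positivity
    have hc4 : 4 ≤ c := by
      rw [hc]
      have hx2 : x ^ 2 ≤ 1 := by nlinarith
      have hpi2 : (9 : ℝ) < Real.pi ^ 2 := by nlinarith [Real.pi_gt_three]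
      rw [le_div_iff₀ (by positivity)]
      have hx2 : x ^ 2 ≤ 1 := by nlinarith
      nlinarith [Real.pi_gt_three]
    have hterm : ∀ k : ℕ, Real.exp (-(c * ((k : ℝ) + 1) ^ 2))
        ≤ Real.exp (-c) * Real.exp (-4) ^ k := by
      intro k
      rw [← Real.exp_nat_mul, ← Real.exp_add]
      apply Real.exp_le_exp.2
      have hk0 : (0 : ℝ) ≤ (k : ℝ) := Nat.cast_nonneg k
      nlinarith [mul_nonneg hc0.le (mul_nonneg hk0 hk0),
        mul_nonneg (by linarith : (0:ℝ) ≤ c - 4) hk0, mul_nonneg hc0.le hk0]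
    have hsumR : Summable (fun k : ℕ => Real.exp (-c) * Real.exp (-4) ^ k) :=
      (summable_geometric_of_lt_one (Real.exp_nonneg _) he4).mul_left _
    have hle := Summable.tsum_le_tsum hterm (summable_exp_sq hc0) hsumR
    rw [tsum_mul_left, tsum_geometric_of_lt_one (Real.exp_nonneg _) he4] at hle
    exact hle
  have hlim : Filter.Tendsto (fun x : ℝ => Real.exp (-(Real.pi ^ 2 / (2 * x ^ 2))) * C)
      (nhdsWithin 0 (Ioi 0)) (nhds 0) := by
    have h2 : Filter.Tendsto (fun x : ℝ => x ^ 2) (nhdsWithin 0 (Ioi 0))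
        (nhdsWithin 0 (Ioi 0)) := by
      rw [tendsto_nhdsWithin_iff]
      constructor
      · have h : Filter.Tendsto (fun x : ℝ => x ^ 2) (nhds 0) (nhds 0) := by
          simpa using (continuous_pow 2).tendsto (0 : ℝ)
        exact h.mono_left nhdsWithin_le_nhds
      · filter_upwards [self_mem_nhdsWithin] with x hx
        exact pow_pos (show (0:ℝ) < x from hx) 2
    have h3 : Filter.Tendsto (fun y : ℝ => Real.pi ^ 2 / 2 * y⁻¹)
        (nhdsWithin 0 (Ioi 0)) Filter.atTop :=
      tendsto_inv_nhdsGT_zero.const_mul_atTop (by positivity)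
    have h4 : Filter.Tendsto (fun x : ℝ => Real.pi ^ 2 / (2 * x ^ 2))
        (nhdsWithin 0 (Ioi 0)) Filter.atTop := by
      refine (h3.comp h2).congr fun x => ?_
      simp only [Function.comp]
      ring
    have h5 := Real.tendsto_exp_neg_atTop_nhds_zero.comp h4
    have h6 := h5.mul_const C
    simpa [Function.comp] using h6
  apply tendsto_of_tendsto_of_tendsto_of_le_of_le' tendsto_const_nhds hlim
  · exact Filter.Eventually.of_forall fun x =>
      tsum_nonneg fun k => Real.exp_nonneg _
  · have hmem : Ioc (0:ℝ) 1 ∈ nhdsWithin (0:ℝ) (Ioi 0) :=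
      Ioc_mem_nhdsGT_of_mem ⟨le_refl 0, zero_lt_one⟩
    filter_upwards [hmem] with x hx
    exact hbound x hx.1 hx.2

lemma F_tendsto_zero :
    Filter.Tendsto F (nhdsWithin 0 (Ioi 0)) (nhds (Real.sqrt (Real.pi / 2))) := by
  have h1 : Filter.Tendsto
      (fun x : ℝ => Real.sqrt (Real.pi / 2)
        * (1 + 2 * ∑' k : ℕ, Real.exp (-(Real.pi ^ 2 / (2 * x ^ 2) * ((k : ℝ) + 1) ^ 2))) - x)
      (nhdsWithin 0 (Ioi 0)) (nhds (Real.sqrt (Real.pi / 2))) := by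
    have hA : Filter.Tendsto
        (fun x : ℝ => (1 : ℝ)
          + 2 * ∑' k : ℕ, Real.exp (-(Real.pi ^ 2 / (2 * x ^ 2) * ((k : ℝ) + 1) ^ 2)))
        (nhdsWithin 0 (Ioi 0)) (nhds 1) := by
      have h := (T_tendsto.const_mul (2 : ℝ)).const_add (1 : ℝ)
      simpa using h
    have hB := hA.const_mul (Real.sqrt (Real.pi / 2))
    have hid : Filter.Tendsto (fun x : ℝ => x) (nhdsWithin 0 (Ioi 0)) (nhds 0) :=
      Filter.tendsto_id.mono_left nhdsWithin_le_nhds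
    have h := hB.sub hid
    simpa using h
  refine Filter.Tendsto.congr' ?_ h1
  filter_upwards [self_mem_nhdsWithin] with x hx
  exact (F_eq hx).symm

end ExcursionAux


/-- If `M` is a nonnegative random variable whose distribution function is that of the maximum
`M⁺₀` of the standard Brownian excursion, namely
`P(M ≤ x) = 1 + 2·Σ_{k≥1} exp(-(2kx)²/2)(1 - (2kx)²)` for `x > 0`,
then `E[M] = √(π/2)`. -/
theorem excursion_max_expectation
    {Ω : Type*} [MeasurableSpace Ω] (P : Measure Ω) [IsProbabilityMeasure P]
    (M : Ω → ℝ) (hmeas : Measurable M) (hpos : ∀ ω, 0 ≤ M ω)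
    (hcdf : ∀ x : ℝ, 0 < x → (P {ω | M ω ≤ x}).toReal
      = 1 + 2 * ∑' k : ℕ,
          Real.exp (-(2 * (k + 1 : ℝ) * x) ^ 2 / 2) * (1 - (2 * (k + 1 : ℝ) * x) ^ 2)) :
    ∫ ω, M ω ∂P = Real.sqrt (Real.pi / 2) := by
  set G : ℝ → ℝ := fun x => -2 * ∑' k : ℕ,
      Real.exp (-(2 * ((k : ℝ) + 1) * x) ^ 2 / 2) * (1 - (2 * ((k : ℝ) + 1) * x) ^ 2) with hG
  have hmsle : ∀ t : ℝ, MeasurableSet {ω | M ω ≤ t} := fun t => hmeas measurableSet_Iic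
  have hcompl : ∀ t : ℝ, P {ω | t < M ω} = 1 - P {ω | M ω ≤ t} := by
    intro t
    have hs : {ω | t < M ω} = {ω | M ω ≤ t}ᶜ := by ext ω; simp [not_le]
    rw [hs, measure_compl (hmsle t) (measure_ne_top P _), measure_univ]
  have hGt : ∀ t : ℝ, 0 < t → (P {ω | t < M ω}).toReal = G t := by
    intro t ht
    rw [hcompl t, ENNReal.toReal_sub_of_le prob_le_one ENNReal.one_ne_top,
      ENNReal.toReal_one, hcdf t ht, hG]
    ring
  have hGnn : ∀ t : ℝ, 0 < t → 0 ≤ G t := fun t ht => (hGt t ht) ▸ ENNReal.toReal_nonneg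
  have hofReal : ∀ t : ℝ, 0 < t → P {ω | t < M ω} = ENNReal.ofReal (G t) := by
    intro t ht
    rw [← hGt t ht, ENNReal.ofReal_toReal (measure_ne_top P _)]
  have hder : ∀ t : ℝ, 0 < t → HasDerivAt (fun y => -(ExcursionAux.F y)) (G t) t := by
    intro t ht
    have h := (ExcursionAux.F_hasDerivAt ht).neg
    refine h.congr_deriv ?_
    rw [hG]; ring
  have hnegF_tendsto : Filter.Tendsto (fun y => -(ExcursionAux.F y))
      Filter.atTop (nhds 0) := by
    simpa using ExcursionAux.F_tendsto_atTop.neg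
  have hint : ∀ a : ℝ, 0 < a → ∫ t in Ioi a, G t = ExcursionAux.F a := by
    intro a ha
    have h := integral_Ioi_of_hasDerivAt_of_nonneg
      ((hder a ha).continuousAt.continuousWithinAt)
      (fun t ht' => hder t (ha.trans ht'))
      (fun t ht' => hGnn t (ha.trans ht'))
      hnegF_tendsto
    rw [h]; ring
  have hintOn : ∀ a : ℝ, 0 < a → IntegrableOn G (Ioi a) := fun a ha =>
    integrableOn_Ioi_deriv_of_nonneg ((hder a ha).continuousAt.continuousWithinAt)
      (fun t ht' => hder t (ha.trans ht')) (fun t ht' => hGnn t (ha.trans ht')) hnegF_tendsto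
  have hlint : ∀ a : ℝ, 0 < a →
      ∫⁻ t in Ioi a, P {ω | t < M ω} = ENNReal.ofReal (ExcursionAux.F a) := by
    intro a ha
    have h1 : ∫⁻ t in Ioi a, P {ω | t < M ω} = ∫⁻ t in Ioi a, ENNReal.ofReal (G t) :=
      setLIntegral_congr_fun measurableSet_Ioi
        (fun t ht => hofReal t (ha.trans ht))
    have h2 : 0 ≤ᵐ[volume.restrict (Ioi a)] G :=
      (ae_restrict_iff' measurableSet_Ioi).2
        (Filter.Eventually.of_forall fun t ht => hGnn t (ha.trans ht))
    rw [h1, ← ofReal_integral_eq_lintegral_ofReal (hintOn a ha) h2, hint a ha]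
  have hlayer : ∫⁻ ω, ENNReal.ofReal (M ω) ∂P = ∫⁻ t in Ioi 0, P {ω | t < M ω} :=
    lintegral_eq_lintegral_meas_lt P (Filter.Eventually.of_forall hpos) hmeas.aemeasurable
  set ν : ℝ → ENNReal := fun t => P {ω | t < M ω} with hν
  have hnu_meas : Measurable ν := by
    apply Antitone.measurable
    intro s t hst
    exact measure_mono fun ω hω => lt_of_le_of_lt hst hω
  set u : ℕ → ℝ := fun n => 1 / ((n : ℝ) + 1) with hu
  have hu_pos : ∀ n, 0 < u n := fun n => by positivity
  have hu_anti : ∀ m n : ℕ, m ≤ n → u n ≤ u m := by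
    intro m n hmn
    have hcast : ((m : ℝ) + 1) ≤ ((n : ℝ) + 1) := by
      have := (Nat.cast_le (α := ℝ)).2 hmn
      linarith
    exact one_div_le_one_div_of_le (by positivity) hcast
  have hmono : Monotone (fun n : ℕ => (Ioi (u n)).indicator ν) := by
    intro m n hmn t
    exact Set.indicator_le_indicator_of_subset (Ioi_subset_Ioi (hu_anti m n hmn))
      (fun a => zero_le) t
  have hsup : ∀ t : ℝ, (⨆ n, (Ioi (u n)).indicator ν t) = (Ioi (0:ℝ)).indicator ν t := by
    intro t
    apply le_antisymm
    · exact iSup_le fun n => Set.indicator_le_indicator_of_subset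
        (Ioi_subset_Ioi (hu_pos n).le) (fun a => zero_le) t
    · by_cases ht : 0 < t
      · obtain ⟨n, hn⟩ := exists_nat_one_div_lt ht
        have h1 : (Ioi (0:ℝ)).indicator ν t = ν t := Set.indicator_of_mem (mem_Ioi.2 ht) ν
        have h2 : (Ioi (u n)).indicator ν t = ν t :=
          Set.indicator_of_mem (mem_Ioi.2 (by rw [hu]; push_cast at hn ⊢; exact hn)) ν
        rw [h1, ← h2]
        exact le_iSup (fun n => (Ioi (u n)).indicator ν t) n
      · rw [Set.indicator_of_notMem (by simpa using ht)]
        exact zero_le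
  have key : ∫⁻ t in Ioi (0:ℝ), ν t = ⨆ n, ∫⁻ t in Ioi (u n), ν t := by
    rw [← lintegral_indicator measurableSet_Ioi ν]
    have h1 : ∀ n, ∫⁻ t in Ioi (u n), ν t = ∫⁻ t, (Ioi (u n)).indicator ν t :=
      fun n => (lintegral_indicator measurableSet_Ioi ν).symm
    simp_rw [h1]
    rw [← lintegral_iSup (fun n => hnu_meas.indicator measurableSet_Ioi) hmono]
    congr 1
    funext t
    exact (hsup t).symm
  have hmono2 : Monotone (fun n => ∫⁻ t in Ioi (u n), ν t) := by
    intro m n hmn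
    exact lintegral_mono' (Measure.restrict_mono (Ioi_subset_Ioi (hu_anti m n hmn)) le_rfl) le_rfl
  have htends : Filter.Tendsto (fun n => ∫⁻ t in Ioi (u n), ν t) Filter.atTop
      (nhds (ENNReal.ofReal (Real.sqrt (Real.pi / 2)))) := by
    have hseq : ∀ n : ℕ, ∫⁻ t in Ioi (u n), ν t = ENNReal.ofReal (ExcursionAux.F (u n)) :=
      fun n => hlint _ (hu_pos n)
    simp_rw [hseq]
    have hu0 : Filter.Tendsto u Filter.atTop (nhdsWithin 0 (Ioi 0)) := by
      rw [tendsto_nhdsWithin_iff]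
      exact ⟨tendsto_one_div_add_atTop_nhds_zero_nat,
        Filter.Eventually.of_forall fun n => hu_pos n⟩
    exact (ENNReal.continuous_ofReal.tendsto _).comp
      (ExcursionAux.F_tendsto_zero.comp hu0)
  have hsupval : (⨆ n, ∫⁻ t in Ioi (u n), ν t)
      = ENNReal.ofReal (Real.sqrt (Real.pi / 2)) := iSup_eq_of_tendsto hmono2 htends
  have htotal : ∫⁻ ω, ENNReal.ofReal (M ω) ∂P = ENNReal.ofReal (Real.sqrt (Real.pi / 2)) := by
    rw [hlayer, key, hsupval]
  rw [integral_eq_lintegral_of_nonneg_ae (Filter.Eventually.of_forall hpos)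
    hmeas.aestronglyMeasurable, htotal, ENNReal.toReal_ofReal (Real.sqrt_nonneg _)]
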